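/- Let F be an infinite field, n ≥ 2, and let g be an n-dimensional F-algebra with an m-dimensional ideal g₁, where 1 ≤ m < n. Then g degenerates to the algebra direct sum g₁ ⊕ a_{n-m}, where a_{n-m} is the (n-m)-dimensional abelian algebra. -/

import Mathlib

open scoped BigOperators

/-- Change-of-basis action of `GL(n,F)` on structure vectors in `F^(n³)`. -/
def actSV {F : Type*} [Field F] {n : ℕ} (g : GL (Fin n) F)
    (lam : Fin n → Fin n → Fin n → F) : Fin n → Fin n → Fin n → F :=
  fun a b c => ∑ i, ∑ j, ∑ k,
    (g : Matrix (Fin n) (Fin n) F) i a * (g : Matrix (Fin n) (Fin n) F) j b *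
      ((g⁻¹ : GL (Fin n) F) : Matrix (Fin n) (Fin n) F) c k * lam i j k

/-- The `GL(n,F)`-orbit of a structure vector. -/
def orbitSV {F : Type*} [Field F] {n : ℕ} (lam : Fin n → Fin n → Fin n → F) :
    Set (Fin n → Fin n → Fin n → F) :=
  {mu | ∃ g : GL (Fin n) F, mu = actSV g lam}

/-- Zariski closure of a set of structure vectors: the common zero locus of all
polynomials vanishing on the set. -/
def zClosure {F : Type*} [Field F] {n : ℕ} (S : Set (Fin n → Fin n → Fin n → F)) :
    Set (Fin n → Fin n → Fin n → F) :=
  {mu | ∀ p : MvPolynomial (Fin n × Fin n × Fin n) F,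
      (∀ lam ∈ S, MvPolynomial.eval (fun t => lam t.1 t.2.1 t.2.2) p = 0) →
      MvPolynomial.eval (fun t => mu t.1 t.2.1 t.2.2) p = 0}

/-- A diagonal matrix with nonzero entries gives an element of `GL`. -/
lemma exists_diag_GL {F : Type*} [Field F] {n : ℕ} (d : Fin n → F) (hd : ∀ i, d i ≠ 0) :
    ∃ g : GL (Fin n) F, (g : Matrix (Fin n) (Fin n) F) = Matrix.diagonal d ∧
      ((g⁻¹ : GL (Fin n) F) : Matrix (Fin n) (Fin n) F) = Matrix.diagonal (fun i => (d i)⁻¹) := by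
  have e1 : (fun i => d i * (d i)⁻¹) = fun _ : Fin n => (1:F) :=
    funext fun i => mul_inv_cancel₀ (hd i)
  have e2 : (fun i => (d i)⁻¹ * d i) = fun _ : Fin n => (1:F) :=
    funext fun i => inv_mul_cancel₀ (hd i)
  exact ⟨⟨Matrix.diagonal d, Matrix.diagonal (fun i => (d i)⁻¹),
    by rw [Matrix.diagonal_mul_diagonal, e1, Matrix.diagonal_one],
    by rw [Matrix.diagonal_mul_diagonal, e2, Matrix.diagonal_one]⟩, rfl, rfl⟩

/-- The action of a diagonal invertible matrix on a structure vector. -/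
lemma actSV_diag {F : Type*} [Field F] {n : ℕ} (d : Fin n → F) (g : GL (Fin n) F)
    (h1 : (g : Matrix (Fin n) (Fin n) F) = Matrix.diagonal d)
    (h2 : ((g⁻¹ : GL (Fin n) F) : Matrix (Fin n) (Fin n) F) = Matrix.diagonal (fun i => (d i)⁻¹))
    (lam : Fin n → Fin n → Fin n → F) (a b c : Fin n) :
    actSV g lam a b c = d a * d b * (d c)⁻¹ * lam a b c := by
  simp [actSV, h1, h2, Matrix.diagonal_apply, Finset.sum_ite_eq, Finset.sum_ite_eq',
    ite_mul, mul_ite, zero_mul, mul_zero, Finset.mul_sum]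

/-- Existence of a basis adapted to a subspace of dimension `m`. -/
lemma exists_adapted_basis {F V : Type*} [Field F] [AddCommGroup V] [Module F V]
    [FiniteDimensional F V] {n m : ℕ} (hmn : m < n) (hV : Module.finrank F V = n)
    (J : Submodule F V) (hJ : Module.finrank F J = m) :
    ∃ b : Module.Basis (Fin n) F V,
      (∀ i : Fin n, (i : ℕ) < m → b i ∈ J) ∧
      (∀ x ∈ J, ∀ k : Fin n, m ≤ (k : ℕ) → b.repr x k = 0) := by
  obtain ⟨W, hW⟩ := Submodule.exists_isCompl J
  have hWr : Module.finrank F W = n - m := by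
    have := Submodule.finrank_add_eq_of_isCompl hW
    omega
  let bJ : Module.Basis (Fin m) F J := Module.finBasisOfFinrankEq F J hJ
  let bW : Module.Basis (Fin (n-m)) F W := Module.finBasisOfFinrankEq F W hWr
  let eq0 := Submodule.prodEquivOfIsCompl J W hW
  let b0 : Module.Basis (Fin m ⊕ Fin (n-m)) F V := ((bJ.prod bW).map eq0)
  let e : Fin m ⊕ Fin (n-m) ≃ Fin n := finSumFinEquiv.trans (finCongr (by omega))
  refine ⟨b0.reindex e, ?_, ?_⟩
  · intro i hi
    have hi' : e.symm i = Sum.inl ⟨i, hi⟩ := by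
      rw [Equiv.symm_apply_eq]
      apply Fin.ext
      simp [e]
    rw [Module.Basis.reindex_apply, hi']
    have : b0 (Sum.inl ⟨i, hi⟩) = (bJ ⟨i, hi⟩ : V) := by
      simp [b0, eq0, Module.Basis.prod_apply, Submodule.coe_prodEquivOfIsCompl']
    rw [this]
    exact (bJ ⟨i, hi⟩).2
  · intro x hx k hk
    have hk' : e.symm k = Sum.inr ⟨(k : ℕ) - m, by omega⟩ := by
      rw [Equiv.symm_apply_eq]
      apply Fin.ext
      simp [e]
      omega
    rw [Module.Basis.repr_reindex_apply, hk']
    have hsx : eq0.symm x = ((⟨x, hx⟩ : J), 0) :=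
      Submodule.prodEquivOfIsCompl_symm_apply_left J W hW (⟨x, hx⟩ : J)
    rw [Module.Basis.map_repr]
    simp only [LinearEquiv.trans_apply, hsx, Module.Basis.prod_repr_inr, map_zero,
      Finsupp.coe_zero, Pi.zero_apply]

/-- if an `n`-dimensional algebra `g` has an `m`-dimensional ideal `g₁`
(`1 ≤ m < n`), then `g` degenerates to `g₁ ⊕ a_{n-m}`: there is a basis adapted to the
ideal whose structure vector `λ` has, in its orbit closure, the structure vector `μ`
obtained from `λ` by keeping only the entries with all three indices `< m` (which is a
structure vector of the algebra direct sum `g₁ ⊕ a_{n-m}`). -/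
theorem degeneration_to_ideal_sum {F V : Type*} [Field F] [Infinite F]
    [AddCommGroup V] [Module F V] [FiniteDimensional F V]
    {n m : ℕ} (hm : 1 ≤ m) (hmn : m < n) (hV : Module.finrank F V = n)
    (B : V →ₗ[F] V →ₗ[F] V)
    (J : Submodule F V) (hJ : Module.finrank F J = m)
    (hideal : ∀ x ∈ J, ∀ a : V, B x a ∈ J ∧ B a x ∈ J) :
    ∃ (b : Module.Basis (Fin n) F V) (lam mu : Fin n → Fin n → Fin n → F),
      (∀ i j, B (b i) (b j) = ∑ k, lam i j k • b k) ∧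
      (∀ i : Fin n, (i : ℕ) < m → b i ∈ J) ∧
      (∀ i j k : Fin n,
        mu i j k = if (i : ℕ) < m ∧ (j : ℕ) < m ∧ (k : ℕ) < m then lam i j k else 0) ∧
      mu ∈ zClosure (orbitSV lam) := by
  obtain ⟨b, hbJ, hrepr⟩ := exists_adapted_basis hmn hV J hJ
  set lam : Fin n → Fin n → Fin n → F := fun i j k => b.repr (B (b i) (b j)) k with hlam
  have hlam0 : ∀ i j k : Fin n, ((i : ℕ) < m ∨ (j : ℕ) < m) → m ≤ (k : ℕ) →
      lam i j k = 0 := by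
    intro i j k hij hk
    rcases hij with hi | hj
    · exact hrepr _ ((hideal (b i) (hbJ i hi) (b j)).1) k hk
    · exact hrepr _ ((hideal (b j) (hbJ j hj) (b i)).2) k hk
  set mu : Fin n → Fin n → Fin n → F := fun i j k =>
    if (i : ℕ) < m ∧ (j : ℕ) < m ∧ (k : ℕ) < m then lam i j k else 0 with hmu
  refine ⟨b, lam, mu, ?_, hbJ, fun i j k => rfl, ?_⟩
  · intro i j
    exact (b.sum_repr (B (b i) (b j))).symm
  -- Zariski closure
  intro p hp
  -- weight of a triple of indices
  set w : Fin n × Fin n × Fin n → ℕ := fun v =>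
    (if (v.1 : ℕ) < m then 0 else 1) + (if (v.2.1 : ℕ) < m then 0 else 1)
      - (if (v.2.2 : ℕ) < m then 0 else 1) with hw
  set q : Fin n × Fin n × Fin n → Polynomial F := fun v =>
    Polynomial.C (lam v.1 v.2.1 v.2.2) * Polynomial.X ^ (w v) with hq
  set P : Polynomial F := MvPolynomial.eval₂ Polynomial.C q p with hP
  have hPt : ∀ t : F,
      P.eval t = MvPolynomial.eval (fun v => (q v).eval t) p := by
    intro t
    have h1 : P.eval t = (Polynomial.evalRingHom t) P := rfl
    rw [h1, hP, MvPolynomial.eval₂_comp_left (Polynomial.evalRingHom t) Polynomial.C q p]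
    have h2 : (Polynomial.evalRingHom t).comp Polynomial.C = RingHom.id F := by
      ext a; simp
    rw [h2]
    rfl
  have hzero : ∀ t : F, t ≠ 0 → P.eval t = 0 := by
    intro t ht
    set d : Fin n → F := fun i => if (i : ℕ) < m then 1 else t with hd
    have hdne : ∀ i, d i ≠ 0 := by
      intro i; by_cases h : (i : ℕ) < m <;> simp [hd, h, ht]
    obtain ⟨g, hg1, hg2⟩ := exists_diag_GL d hdne
    have hval : (fun v : Fin n × Fin n × Fin n => (q v).eval t)
        = (fun v => actSV g lam v.1 v.2.1 v.2.2) := by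
      funext v
      obtain ⟨a, b', c⟩ := v
      rw [actSV_diag d g hg1 hg2]
      simp only [hq, hd, Polynomial.eval_mul, Polynomial.eval_C, Polynomial.eval_pow,
        Polynomial.eval_X, hw]
      by_cases ha : (a : ℕ) < m <;> by_cases hb : (b' : ℕ) < m <;>
        by_cases hc : (c : ℕ) < m
      · simp [ha, hb, hc]
      · rw [hlam0 a b' c (Or.inl ha) (le_of_not_gt hc)]; simp
      · simp [ha, hb, hc]; ring
      · rw [hlam0 a b' c (Or.inl ha) (le_of_not_gt hc)]; simp
      · simp [ha, hb, hc]; ring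
      · rw [hlam0 a b' c (Or.inr hb) (le_of_not_gt hc)]; simp
      · simp [ha, hb, hc]; ring
      · simp only [ha, hb, hc, if_false]
        rw [pow_one]
        field_simp
    rw [hPt t, hval]
    exact hp _ ⟨g, rfl⟩
  have hP0 : P = 0 := by
    apply Polynomial.eq_zero_of_infinite_isRoot
    apply Set.Infinite.mono (s := ({(0 : F)}ᶜ : Set F))
    · intro t ht
      exact hzero t ht
    · exact (Set.finite_singleton (0 : F)).infinite_compl
  have hfinal : (fun v : Fin n × Fin n × Fin n => (q v).eval 0)
      = (fun v => mu v.1 v.2.1 v.2.2) := by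
    funext v
    obtain ⟨a, b', c⟩ := v
    simp only [hq, hmu, hw, Polynomial.eval_mul, Polynomial.eval_C, Polynomial.eval_pow,
      Polynomial.eval_X]
    by_cases ha : (a : ℕ) < m <;> by_cases hb : (b' : ℕ) < m <;>
      by_cases hc : (c : ℕ) < m
    · simp [ha, hb, hc]
    · rw [hlam0 a b' c (Or.inl ha) (le_of_not_gt hc)]; simp [ha, hb, hc]
    · simp [ha, hb, hc]
    · rw [hlam0 a b' c (Or.inl ha) (le_of_not_gt hc)]; simp [ha, hb, hc]
    · simp [ha, hb, hc]
    · rw [hlam0 a b' c (Or.inr hb) (le_of_not_gt hc)]; simp [ha, hb, hc]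
    · simp [ha, hb, hc]
    · simp [ha, hb, hc]
  have := hPt 0
  rw [hP0, Polynomial.eval_zero, hfinal] at this
  exact this.symm
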